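/- Let x be feasible for the primal LP (x ∈ P) and s feasible for the dual LP (s ∈ D, with some y satisfying Aᵀy + s = c). Then x minimizes cᵀx over P and y maximizes bᵀy over the dual feasible set if and only if xᵀs = 0. Moreover, if both P and D are nonempty, there exist x* ∈ P and s* ∈ D such that (x*)ᵀs* = 0 and x* + s* > 0 componentwise (strict complementarity). -/

import Mathlib

open Matrix Finset

theorem farkas_fin {ι : Type*} [Fintype ι] :
    ∀ (n : ℕ) (a : Fin n → ι → ℝ) (b : ι → ℝ),
      (∃ x : Fin n → ℝ, (∀ i, 0 ≤ x i) ∧ ∑ i, x i • a i = b) ∨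
      (∃ y : ι → ℝ, (∀ i, 0 ≤ a i ⬝ᵥ y) ∧ b ⬝ᵥ y < 0) := by
  intro n
  induction n with
  | zero =>
    intro a b
    by_cases hb : b = 0
    · exact Or.inl ⟨0, fun i => le_rfl, by simp [hb]⟩
    · refine Or.inr ⟨-b, fun i => i.elim0, ?_⟩
      have hpos : (0:ℝ) < b ⬝ᵥ b := by
        have hnn : (0:ℝ) ≤ b ⬝ᵥ b := Finset.sum_nonneg fun i _ => mul_self_nonneg _
        rcases lt_or_eq_of_le hnn with h | h
        · exact h
        · exact absurd (dotProduct_self_eq_zero.mp h.symm) hb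
      simpa using neg_neg_of_pos hpos
  | succ n ih =>
    intro a b
    set a0 : Fin n → ι → ℝ := fun i => a i.castSucc with ha0
    set aL : ι → ℝ := a (Fin.last n) with haL
    rcases ih a0 b with ⟨x, hx, hsum⟩ | ⟨y, hy, hby⟩
    · refine Or.inl ⟨Fin.snoc x 0, ?_, ?_⟩
      · intro i
        refine Fin.lastCases ?_ ?_ i <;> simp [hx]
      · rw [Fin.sum_univ_castSucc]
        simpa [ha0] using hsum
    · by_cases hL : 0 ≤ aL ⬝ᵥ y
      · refine Or.inr ⟨y, ?_, hby⟩
        intro i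
        refine Fin.lastCases ?_ ?_ i
        · exact hL
        · exact hy
      · push_neg at hL
        have hne : aL ⬝ᵥ y ≠ 0 := ne_of_lt hL
        set μ : (ι → ℝ) → ℝ := fun v => (v ⬝ᵥ y) / (aL ⬝ᵥ y) with hμ
        set hat : (ι → ℝ) → (ι → ℝ) := fun v => v - μ v • aL with hhat
        rcases ih (fun i => hat (a0 i)) (hat b) with ⟨x, hx, hsum⟩ | ⟨z, hz, hbz⟩
        · -- feasible case
          set t : ℝ := μ b - ∑ i, x i * μ (a0 i) with ht
          have htpos : 0 ≤ t := by
            have h1 : 0 < μ b := div_pos_of_neg_of_neg hby hL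
            have h2 : ∀ i, x i * μ (a0 i) ≤ 0 := fun i =>
              mul_nonpos_of_nonneg_of_nonpos (hx i)
                (div_nonpos_of_nonneg_of_nonpos (hy i) hL.le)
            have : ∑ i, x i * μ (a0 i) ≤ 0 := Finset.sum_nonpos fun i _ => h2 i
            linarith
          refine Or.inl ⟨Fin.snoc x t, ?_, ?_⟩
          · intro i; refine Fin.lastCases ?_ ?_ i <;> simp [hx, htpos]
          · rw [Fin.sum_univ_castSucc]
            simp only [Fin.snoc_castSucc, Fin.snoc_last]
            have : ∑ i, x i • a0 i = b - μ b • aL + (∑ i, x i * μ (a0 i)) • aL := by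
              have e1 : ∑ i, x i • hat (a0 i)
                  = ∑ i, x i • a0 i - (∑ i, x i * μ (a0 i)) • aL := by
                rw [Finset.sum_smul]
                rw [← Finset.sum_sub_distrib]
                refine Finset.sum_congr rfl fun i _ => ?_
                funext j
                simp only [hhat, Pi.sub_apply, Pi.smul_apply, smul_eq_mul]
                ring
              rw [e1] at hsum
              have : hat b = b - μ b • aL := rfl
              rw [this] at hsum
              abel_nf
              abel_nf at hsum
              linear_combination (norm := module) hsum
            rw [this, ht]
            module
        · -- infeasible case
          set y' : ι → ℝ := z - ((aL ⬝ᵥ z) / (aL ⬝ᵥ y)) • y with hy'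
          have key : ∀ v : ι → ℝ, v ⬝ᵥ y' = hat v ⬝ᵥ z := by
            intro v
            simp only [hy', hhat, hμ, dotProduct_sub, dotProduct_smul, sub_dotProduct,
              smul_dotProduct, smul_eq_mul]
            field_simp
          refine Or.inr ⟨y', ?_, by rw [key]; exact hbz⟩
          intro i
          refine Fin.lastCases ?_ ?_ i
          · rw [key]
            have : hat aL = 0 := by
              simp [hhat, hμ, div_self hne]
            rw [this]; simp
          · intro i; rw [key]; exact hz i

theorem farkas {ι κ : Type*} [Fintype ι] [Fintype κ] (a : κ → ι → ℝ) (b : ι → ℝ) :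
    (∃ x : κ → ℝ, (∀ i, 0 ≤ x i) ∧ ∑ i, x i • a i = b) ∨
      (∃ y : ι → ℝ, (∀ i, 0 ≤ a i ⬝ᵥ y) ∧ b ⬝ᵥ y < 0) := by
  obtain e : κ ≃ Fin (Fintype.card κ) := Fintype.equivFin κ
  rcases farkas_fin (Fintype.card κ) (fun i => a (e.symm i)) b with ⟨x, hx, hsum⟩ | h
  · refine Or.inl ⟨fun k => x (e k), fun k => hx _, ?_⟩
    rw [← Equiv.sum_comp e.symm (fun k => x (e k) • a k)]
    simpa using hsum
  · rcases h with ⟨y, hy, hby⟩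
    exact Or.inr ⟨y, fun k => by simpa using hy (e k), hby⟩

theorem tucker_index {ι : Type*} [Fintype ι] [DecidableEq ι]
    (M : Matrix ι ι ℝ) (hskew : Mᵀ = -M) (i : ι) :
    ∃ z : ι → ℝ, (∀ j, 0 ≤ z j) ∧ (∀ j, 0 ≤ M.mulVec z j) ∧
      0 < z i + M.mulVec z i := by
  classical
  have hM : ∀ r j, M r j = -M j r := by
    intro r j
    have := congr_fun (congr_fun hskew j) r
    simpa [Matrix.transpose_apply] using this
  set col : (ι ⊕ ι ⊕ Unit) → (ι ⊕ Unit → ℝ) := fun k =>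
    match k with
    | Sum.inl j => Sum.elim (fun r => M r j) (fun _ => M i j)
    | Sum.inr (Sum.inl j) => Sum.elim (fun r => if r = j then (-1:ℝ) else 0) (fun _ => 0)
    | Sum.inr (Sum.inr _) => Sum.elim 0 (fun _ => (-1:ℝ)) with hcol
  set tgt : ι ⊕ Unit → ℝ := Sum.elim 0 (fun _ => 1) with htgt
  rcases farkas col tgt with ⟨x, hx, hsum⟩ | ⟨y, hy, hby⟩
  · set z : ι → ℝ := fun j => x (Sum.inl j) with hz
    have hrow : ∀ r : ι, M.mulVec z r = x (Sum.inr (Sum.inl r)) := by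
      intro r
      have h := congr_fun hsum (Sum.inl r)
      simp only [Finset.sum_apply, Pi.smul_apply, smul_eq_mul, Fintype.sum_sum_type,
        hcol, htgt, Sum.elim_inl, Sum.elim_inr, Pi.zero_apply] at h
      simp only [mul_ite, mul_neg_one, mul_zero, Finset.sum_ite_eq, Finset.mem_univ,
        if_true] at h
      simp only [Finset.sum_const, smul_zero, add_zero] at h
      have : (M *ᵥ z) r = ∑ j, x (Sum.inl j) * M r j := by
        simp [Matrix.mulVec, dotProduct, hz, mul_comm]
      linarith
    have hunit : M.mulVec z i = 1 + x (Sum.inr (Sum.inr ())) := by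
      have h := congr_fun hsum (Sum.inr ())
      simp only [Finset.sum_apply, Pi.smul_apply, smul_eq_mul, Fintype.sum_sum_type,
        hcol, htgt, Sum.elim_inl, Sum.elim_inr, Pi.zero_apply] at h
      simp only [mul_zero, mul_neg_one, Finset.sum_const, smul_zero,
        Finset.sum_neg_distrib] at h
      have h2 : (M *ᵥ z) i = ∑ j, x (Sum.inl j) * M i j := by
        simp [Matrix.mulVec, dotProduct, hz, mul_comm]
      simp only [Finset.sum_const, Finset.card_univ, Fintype.card_unit, one_smul,
        Fintype.sum_unique] at h
      linarith
    refine ⟨z, fun j => hx _, fun j => by rw [hrow]; exact hx _, ?_⟩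
    have := hx (Sum.inr (Sum.inr ()))
    have := hx (Sum.inl i)
    rw [hunit]
    linarith
  · -- infeasible: build z from the separating vector
    set u : ι → ℝ := fun r => y (Sum.inl r) with hu
    set β : ℝ := y (Sum.inr ()) with hβ
    have hβneg : β < 0 := by
      have := hby
      simpa [htgt, dotProduct, Fintype.sum_sum_type, Fintype.sum_unique, hβ] using hby
    have hunonpos : ∀ j, u j ≤ 0 := by
      intro j
      have h := hy (Sum.inr (Sum.inl j))
      simp only [hcol, dotProduct, Fintype.sum_sum_type, Sum.elim_inl, Sum.elim_inr,
        ite_mul, neg_one_mul, zero_mul, Finset.sum_ite_eq, Finset.mem_univ, if_true,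
        Fintype.sum_unique, Pi.zero_apply] at h
      rw [Finset.sum_ite_eq' Finset.univ j (fun x => -y (Sum.inl x))] at h
      simp only [Finset.mem_univ, if_true, add_zero] at h
      simpa [hu] using h
    set z : ι → ℝ := fun j => -u j - (if j = i then β else 0) with hz
    have hznn : ∀ j, 0 ≤ z j := by
      intro j
      simp only [hz]
      rcases eq_or_ne j i with rfl | hne
      · simp; nlinarith [hunonpos j]
      · simp [hne]; linarith [hunonpos j]
    have hMz : ∀ j, 0 ≤ M.mulVec z j := by
      intro j
      have h := hy (Sum.inl j)
      simp only [hcol, dotProduct, Fintype.sum_sum_type, Sum.elim_inl, Sum.elim_inr,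
        Fintype.sum_unique] at h
      -- h : 0 ≤ ∑ r, M r j * u r + M i j * β
      have h2 : (M *ᵥ z) j = ∑ r, M j r * z r := by
        simp [Matrix.mulVec, dotProduct]
      have h3 : ∑ r, M j r * z r = ∑ r, M j r * (-u r) - M j i * β := by
        simp only [hz, mul_sub, Finset.sum_sub_distrib, mul_ite, mul_zero]
        simp [Finset.sum_ite_eq, mul_neg]
      have h4 : ∑ r : ι, M r j * u r = ∑ r : ι, M j r * (-u r) := by
        refine Finset.sum_congr rfl fun r _ => ?_
        rw [hM r j]; ring
      have h5 : M i j * β = -(M j i * β) := by rw [hM i j]; ring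
      have h6 : ∑ r : ι, M r j * u r = ∑ x : ι, M x j * y (Sum.inl x) := rfl
      have h7 : β = y (Sum.inr default) := rfl
      rw [h2, h3, ← h4]
      rw [h7] at h5
      linarith [h, h5]
    refine ⟨z, hznn, hMz, ?_⟩
    have hzi : 0 < z i := by
      have : z i = -u i - β := by simp [hz]
      rw [this]
      have := hunonpos i
      linarith
    have := hMz i
    linarith

theorem tucker {ι : Type*} [Fintype ι] [DecidableEq ι]
    (M : Matrix ι ι ℝ) (hskew : Mᵀ = -M) :
    ∃ z : ι → ℝ, (∀ j, 0 ≤ z j) ∧ (∀ j, 0 ≤ M.mulVec z j) ∧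
      ∀ j, 0 < z j + M.mulVec z j := by
  classical
  choose zf h1 h2 h3 using tucker_index M hskew
  have hmv : M.mulVec (∑ i, zf i) = ∑ i, M.mulVec (zf i) := by
    funext r
    simp only [Matrix.mulVec, dotProduct, Finset.sum_apply, Finset.mul_sum]
    exact Finset.sum_comm
  refine ⟨∑ i, zf i, ?_, ?_, ?_⟩
  · intro j
    rw [Finset.sum_apply]
    exact Finset.sum_nonneg fun i _ => h1 i j
  · intro j
    rw [hmv, Finset.sum_apply]
    exact Finset.sum_nonneg fun i _ => h2 i j
  · intro j
    rw [hmv, Finset.sum_apply, Finset.sum_apply, ← Finset.sum_add_distrib]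
    have hterm : ∀ i ∈ Finset.univ, (0:ℝ) ≤ zf i j + M.mulVec (zf i) j :=
      fun i _ => by linarith [h1 i j, h2 i j]
    calc (0:ℝ) < zf j j + M.mulVec (zf j) j := h3 j
    _ ≤ ∑ i, (zf i j + M.mulVec (zf i) j) :=
        Finset.single_le_sum hterm (Finset.mem_univ j)

lemma dp_swap {d n : ℕ} (A : Matrix (Fin d) (Fin n) ℝ) (x : Fin n → ℝ) (y : Fin d → ℝ) :
    A.mulVec x ⬝ᵥ y = x ⬝ᵥ Aᵀ.mulVec y := by
  rw [dotProduct_comm, Matrix.dotProduct_mulVec, ← Matrix.mulVec_transpose,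
    dotProduct_comm, dotProduct_comm x]

theorem goldman_tucker {d n : ℕ}
    (A : Matrix (Fin d) (Fin n) ℝ) (b : Fin d → ℝ) (c : Fin n → ℝ)
    (x₀ : Fin n → ℝ) (hx₀ : A.mulVec x₀ = b) (hx₀n : ∀ i, 0 ≤ x₀ i)
    (y₀ : Fin d → ℝ) (s₀ : Fin n → ℝ) (hs₀ : Aᵀ.mulVec y₀ + s₀ = c) (hs₀n : ∀ i, 0 ≤ s₀ i) :
    ∃ (xs : Fin n → ℝ) (ys : Fin d → ℝ) (ss : Fin n → ℝ),
       A.mulVec xs = b ∧ (∀ i, 0 ≤ xs i) ∧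
       Aᵀ.mulVec ys + ss = c ∧ (∀ i, 0 ≤ ss i) ∧
       xs ⬝ᵥ ss = 0 ∧ ∀ i, 0 < xs i + ss i := by
  classical
  set M : Matrix ((Fin d ⊕ Fin d) ⊕ (Fin n ⊕ Unit)) ((Fin d ⊕ Fin d) ⊕ (Fin n ⊕ Unit)) ℝ :=
    fun p q =>
    match p, q with
    | Sum.inl (Sum.inl r), Sum.inr (Sum.inl j) => A r j
    | Sum.inl (Sum.inl r), Sum.inr (Sum.inr _) => -b r
    | Sum.inl (Sum.inr r), Sum.inr (Sum.inl j) => -A r j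
    | Sum.inl (Sum.inr r), Sum.inr (Sum.inr _) => b r
    | Sum.inr (Sum.inl j), Sum.inl (Sum.inl r) => -A r j
    | Sum.inr (Sum.inl j), Sum.inl (Sum.inr r) => A r j
    | Sum.inr (Sum.inl j), Sum.inr (Sum.inr _) => c j
    | Sum.inr (Sum.inr _), Sum.inl (Sum.inl r) => b r
    | Sum.inr (Sum.inr _), Sum.inl (Sum.inr r) => -b r
    | Sum.inr (Sum.inr _), Sum.inr (Sum.inl j) => -c j
    | _, _ => 0 with hMdef
  have hskew : Mᵀ = -M := by
    funext p q
    rcases p with (r | r) | (j | u) <;> rcases q with (r' | r') | (j' | u') <;>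
      (rw [Matrix.transpose_apply, Matrix.neg_apply] <;> simp [hMdef])
  obtain ⟨z, hz, hMz, hstrict⟩ := tucker M hskew
  set yp : Fin d → ℝ := fun r => z (Sum.inl (Sum.inl r)) with hyp
  set ym : Fin d → ℝ := fun r => z (Sum.inl (Sum.inr r)) with hym
  set xv : Fin n → ℝ := fun j => z (Sum.inr (Sum.inl j)) with hxv
  set τ : ℝ := z (Sum.inr (Sum.inr ())) with hτ
  set yv : Fin d → ℝ := yp - ym with hyv
  -- component computations
  have comp1 : ∀ r : Fin d, M.mulVec z (Sum.inl (Sum.inl r)) = A.mulVec xv r - τ * b r := by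
    intro r
    simp only [Matrix.mulVec, dotProduct, Fintype.sum_sum_type, Fintype.sum_unique]
    simp [hMdef, Matrix.mulVec, dotProduct, hxv, hτ]
    ring
  have comp2 : ∀ r : Fin d, M.mulVec z (Sum.inl (Sum.inr r)) = -(A.mulVec xv r) + τ * b r := by
    intro r
    simp only [Matrix.mulVec, dotProduct, Fintype.sum_sum_type, Fintype.sum_unique]
    simp [hMdef, Matrix.mulVec, dotProduct, hxv, hτ]
    ring
  have comp3 : ∀ j : Fin n,
      M.mulVec z (Sum.inr (Sum.inl j)) = -(Aᵀ.mulVec yv j) + τ * c j := by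
    intro j
    simp only [Matrix.mulVec, dotProduct, Fintype.sum_sum_type, Fintype.sum_unique]
    simp only [hMdef, hyv, hyp, hym, hxv, hτ, Matrix.mulVec, dotProduct,
      Matrix.transpose_apply, Pi.sub_apply, neg_mul, mul_sub, mul_zero, zero_mul,
      Finset.sum_const_zero, add_zero, zero_add, Finset.sum_sub_distrib,
      Finset.sum_neg_distrib]
    ring
  have comp4 : M.mulVec z (Sum.inr (Sum.inr ())) = b ⬝ᵥ yv - c ⬝ᵥ xv := by
    simp only [Matrix.mulVec, dotProduct, Fintype.sum_sum_type, Fintype.sum_unique]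
    simp only [hMdef, hyv, hyp, hym, hxv, hτ, dotProduct, Pi.sub_apply, neg_mul, mul_sub,
      mul_zero, zero_mul, Finset.sum_const_zero, add_zero, zero_add,
      Finset.sum_sub_distrib, Finset.sum_neg_distrib]
    ring
  -- basic consequences
  have hAx : A.mulVec xv = τ • b := by
    funext r
    have h1 := hMz (Sum.inl (Sum.inl r))
    have h2 := hMz (Sum.inl (Sum.inr r))
    rw [comp1 r] at h1
    rw [comp2 r] at h2
    have : A.mulVec xv r = τ * b r := by linarith
    simpa [Pi.smul_apply, smul_eq_mul] using this
  set sv : Fin n → ℝ := fun j => -(Aᵀ.mulVec yv j) + τ * c j with hsv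
  have hsvnn : ∀ j, 0 ≤ sv j := fun j => by
    have := hMz (Sum.inr (Sum.inl j)); rwa [comp3 j] at this
  have hgap : 0 ≤ b ⬝ᵥ yv - c ⬝ᵥ xv := by
    have := hMz (Sum.inr (Sum.inr ())); rwa [comp4] at this
  have hxvnn : ∀ j, 0 ≤ xv j := fun j => hz _
  have hτnn : 0 ≤ τ := hz _
  have hstrict' : ∀ j : Fin n, 0 < xv j + sv j := by
    intro j
    have := hstrict (Sum.inr (Sum.inl j))
    rwa [comp3 j] at this
  have hgapstrict : 0 < τ + (b ⬝ᵥ yv - c ⬝ᵥ xv) := by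
    have := hstrict (Sum.inr (Sum.inr ()))
    rwa [comp4] at this
  -- τ must be positive
  have hτpos : 0 < τ := by
    rcases lt_or_eq_of_le hτnn with h | h
    · exact h
    · exfalso
      have hAx0 : A.mulVec xv = 0 := by rw [hAx, ← h]; simp
      -- c ⬝ᵥ xv ≥ 0
      have hcx : 0 ≤ c ⬝ᵥ xv := by
        have e : Aᵀ.mulVec y₀ ⬝ᵥ xv = 0 := by
          rw [dotProduct_comm, ← dp_swap, hAx0, zero_dotProduct]
        have : c ⬝ᵥ xv = s₀ ⬝ᵥ xv := by
          rw [← hs₀, add_dotProduct, e, zero_add]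
        rw [this]
        exact Finset.sum_nonneg fun j _ => mul_nonneg (hs₀n j) (hxvnn j)
      -- b ⬝ᵥ yv ≤ 0
      have hby : b ⬝ᵥ yv ≤ 0 := by
        have h1 : b ⬝ᵥ yv = x₀ ⬝ᵥ Aᵀ.mulVec yv := by
          rw [← hx₀, dp_swap]
        have h2 : ∀ j, Aᵀ.mulVec yv j = τ * c j - sv j := by
          intro j; simp [hsv]
        have h3 : x₀ ⬝ᵥ Aᵀ.mulVec yv + x₀ ⬝ᵥ sv = 0 := by
          simp only [dotProduct, ← Finset.sum_add_distrib]
          refine Finset.sum_eq_zero fun j _ => ?_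
          rw [h2 j, ← h]
          ring
        have h4 : 0 ≤ x₀ ⬝ᵥ sv :=
          Finset.sum_nonneg fun j _ => mul_nonneg (hx₀n j) (hsvnn j)
        rw [h1]
        linarith
      rw [← h] at hgapstrict
      simp at hgapstrict
      linarith
  -- assemble scaled solution
  refine ⟨τ⁻¹ • xv, τ⁻¹ • yv, τ⁻¹ • sv, ?_, ?_, ?_, ?_, ?_, ?_⟩
  · rw [Matrix.mulVec_smul, hAx, smul_smul, inv_mul_cancel₀ (ne_of_gt hτpos), one_smul]
  · intro j
    exact mul_nonneg (inv_nonneg.mpr hτnn) (hxvnn j)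
  · funext j
    have : Aᵀ.mulVec yv j + sv j = τ * c j := by simp [hsv]
    rw [Matrix.mulVec_smul]
    simp only [Pi.add_apply, Pi.smul_apply, smul_eq_mul]
    field_simp
    linarith [this]
  · intro j
    exact mul_nonneg (inv_nonneg.mpr hτnn) (hsvnn j)
  · -- complementarity
    have hxs : xv ⬝ᵥ sv = 0 := by
      have hub : xv ⬝ᵥ sv = τ * (c ⬝ᵥ xv - b ⬝ᵥ yv) := by
        have e1 : xv ⬝ᵥ sv = τ * (c ⬝ᵥ xv) - xv ⬝ᵥ Aᵀ.mulVec yv := by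
          simp only [hsv, dotProduct, Finset.mul_sum, ← Finset.sum_sub_distrib]
          refine Finset.sum_congr rfl fun j _ => ?_
          ring
        have e2 : xv ⬝ᵥ Aᵀ.mulVec yv = τ * (b ⬝ᵥ yv) := by
          rw [← dp_swap, hAx]
          simp [smul_dotProduct]
        rw [e1, e2]
        ring
      have hnn : 0 ≤ xv ⬝ᵥ sv :=
        Finset.sum_nonneg fun j _ => mul_nonneg (hxvnn j) (hsvnn j)
      have hle : xv ⬝ᵥ sv ≤ 0 := by
        rw [hub]
        have := mul_nonneg hτnn hgap
        nlinarith
      linarith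
    simp only [smul_dotProduct, dotProduct_smul, smul_eq_mul, hxs]
    ring
  · intro j
    simp only [Pi.smul_apply, smul_eq_mul]
    have h1 := hstrict' j
    have h0 : 0 < τ⁻¹ := inv_pos.mpr hτpos
    rw [← mul_add]
    exact mul_pos h0 h1

lemma lp_gap {d n : ℕ} (A : Matrix (Fin d) (Fin n) ℝ) {b : Fin d → ℝ} {c : Fin n → ℝ}
    {x' : Fin n → ℝ} {y' : Fin d → ℝ} {s' : Fin n → ℝ}
    (hx : A.mulVec x' = b) (hs : Aᵀ.mulVec y' + s' = c) :
    x' ⬝ᵥ s' = c ⬝ᵥ x' - b ⬝ᵥ y' := by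
  have : s' = c - Aᵀ.mulVec y' := by rw [← hs]; funext j; simp
  rw [this, dotProduct_sub, ← dp_swap, hx, dotProduct_comm x' c]


/-- Complementary slackness and strict complementarity for the primal LP
`min {cᵀx : Ax = b, x ≥ 0}` and its dual `max {bᵀy : Aᵀy + s = c, s ≥ 0}`. -/
theorem complementary_slackness {d n : ℕ}
    (A : Matrix (Fin d) (Fin n) ℝ) (b : Fin d → ℝ) (c : Fin n → ℝ)
    (x s : Fin n → ℝ) (y : Fin d → ℝ)
    (hxP : A.mulVec x = b ∧ ∀ i, 0 ≤ x i)
    (hsD : Aᵀ.mulVec y + s = c ∧ ∀ i, 0 ≤ s i) :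
    (((∀ x' : Fin n → ℝ, A.mulVec x' = b → (∀ i, 0 ≤ x' i) → c ⬝ᵥ x ≤ c ⬝ᵥ x') ∧
      (∀ (y' : Fin d → ℝ) (s' : Fin n → ℝ), Aᵀ.mulVec y' + s' = c → (∀ i, 0 ≤ s' i) →
        b ⬝ᵥ y' ≤ b ⬝ᵥ y)) ↔ x ⬝ᵥ s = 0) ∧
    ((∃ x₀ : Fin n → ℝ, A.mulVec x₀ = b ∧ ∀ i, 0 ≤ x₀ i) →
     (∃ (y₀ : Fin d → ℝ) (s₀ : Fin n → ℝ), Aᵀ.mulVec y₀ + s₀ = c ∧ ∀ i, 0 ≤ s₀ i) →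
     ∃ (xs : Fin n → ℝ) (ys : Fin d → ℝ) (ss : Fin n → ℝ),
       A.mulVec xs = b ∧ (∀ i, 0 ≤ xs i) ∧
       Aᵀ.mulVec ys + ss = c ∧ (∀ i, 0 ≤ ss i) ∧
       xs ⬝ᵥ ss = 0 ∧ ∀ i, 0 < xs i + ss i) := by
  obtain ⟨hxA, hxnn⟩ := hxP
  obtain ⟨hsA, hsnn⟩ := hsD
  constructor
  · constructor
    · rintro ⟨hxopt, hyopt⟩
      obtain ⟨xs, ys, ss, hA1, hn1, hA2, hn2, hcomp, _⟩ :=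
        goldman_tucker A b c x hxA hxnn y s hsA hsnn
      have g1 : x ⬝ᵥ s = c ⬝ᵥ x - b ⬝ᵥ y := lp_gap A hxA hsA
      have g2 : xs ⬝ᵥ ss = c ⬝ᵥ xs - b ⬝ᵥ ys := lp_gap A hA1 hA2
      have h1 : c ⬝ᵥ x ≤ c ⬝ᵥ xs := hxopt xs hA1 hn1
      have h2 : b ⬝ᵥ ys ≤ b ⬝ᵥ y := hyopt ys ss hA2 hn2
      have hnn : 0 ≤ x ⬝ᵥ s :=
        Finset.sum_nonneg fun j _ => mul_nonneg (hxnn j) (hsnn j)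
      linarith
    · intro hcomp
      have g1 : c ⬝ᵥ x = b ⬝ᵥ y := by
        have := lp_gap A hxA hsA
        linarith [this, hcomp]
      constructor
      · intro x' hA' hn'
        have g2 : x' ⬝ᵥ s = c ⬝ᵥ x' - b ⬝ᵥ y := lp_gap A hA' hsA
        have hnn : 0 ≤ x' ⬝ᵥ s :=
          Finset.sum_nonneg fun j _ => mul_nonneg (hn' j) (hsnn j)
        linarith
      · intro y' s' hA' hn'
        have g2 : x ⬝ᵥ s' = c ⬝ᵥ x - b ⬝ᵥ y' := lp_gap A hxA hA'
        have hnn : 0 ≤ x ⬝ᵥ s' :=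
          Finset.sum_nonneg fun j _ => mul_nonneg (hxnn j) (hn' j)
        linarith
  · rintro ⟨x₀, hx₀, hx₀n⟩ ⟨y₀, s₀, hs₀, hs₀n⟩
    exact goldman_tucker A b c x₀ hx₀ hx₀n y₀ s₀ hs₀ hs₀n
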